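/- If {Π_a} is a PVM and {W_{ab}} is a joint POVM of {Π_a} and a POVM {B_b}, then W_{ab} = Π_a W_{ab} Π_a for all a, b; in particular each W_{ab} commutes with each Π_a. -/

import Mathlib

open Matrix BigOperators ComplexOrder

private lemma psd_neg_psd_eq_zero {d : ℕ} {N : Matrix (Fin d) (Fin d) ℂ}
    (h1 : N.PosSemidef) (h2 : (-N).PosSemidef) : N = 0 := by
  have hv : ∀ x : Fin d → ℂ, N *ᵥ x = 0 := by
    intro x
    rw [← h1.dotProduct_mulVec_zero_iff]
    have a1 := h1.dotProduct_mulVec_nonneg x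
    have a2 := h2.dotProduct_mulVec_nonneg x
    rw [neg_mulVec, dotProduct_neg] at a2
    exact le_antisymm (neg_nonneg.mp a2) a1
  ext i j
  have := congrFun (hv (Pi.single j 1)) i
  simpa [mulVec_single] using this

private lemma sandwich {d : ℕ} {X Q : Matrix (Fin d) (Fin d) ℂ}
    (hX : X.PosSemidef) (hQ : Qᴴ = Q) (hZ : Q * X * Q = 0) : X * Q = 0 := by
  obtain ⟨A, hA⟩ : ∃ A : Matrix (Fin d) (Fin d) ℂ, X = Aᴴ * A := by
    classical
    open scoped MatrixOrder in
    obtain ⟨A, hA⟩ := CStarAlgebra.nonneg_iff_eq_star_mul_self.mp hX.nonneg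
    exact ⟨A, hA⟩
  have hAQ : A * Q = 0 := by
    have : (A * Q)ᴴ * (A * Q) = 0 := by
      rw [conjTranspose_mul, hQ]
      calc Q * Aᴴ * (A * Q) = Q * (Aᴴ * A) * Q := by
            rw [Matrix.mul_assoc, Matrix.mul_assoc, Matrix.mul_assoc]
        _ = 0 := by rw [← hA, hZ]
    exact conjTranspose_mul_self_eq_zero.mp this
  calc X * Q = Aᴴ * (A * Q) := by rw [hA, Matrix.mul_assoc]
    _ = 0 := by rw [hAQ, mul_zero]

theorem stmt_3 {d m n : ℕ}
    (P : Fin m → Matrix (Fin d) (Fin d) ℂ)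
    (B : Fin n → Matrix (Fin d) (Fin d) ℂ)
    (W : Fin m → Fin n → Matrix (Fin d) (Fin d) ℂ)
    (hPh : ∀ a, (P a).IsHermitian)
    (hPo : ∀ a a', P a * P a' = if a = a' then P a else 0)
    (hPsum : ∑ a, P a = 1)
    (hBpsd : ∀ b, (B b).PosSemidef) (hBsum : ∑ b, B b = 1)
    (hWpsd : ∀ a b, (W a b).PosSemidef)
    (hmargP : ∀ a, ∑ b, W a b = P a)
    (hmargB : ∀ b, ∑ a, W a b = B b) :
    (∀ a b, W a b = P a * W a b * P a) ∧
    (∀ a a' b, W a b * P a' = P a' * W a b) := by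
  have key : ∀ a b, W a b * (1 - P a) = 0 ∧ (1 - P a) * W a b = 0 := by
    intro a b
    have hQh : (1 - P a)ᴴ = 1 - P a := by
      simp [conjTranspose_sub, (hPh a).eq]
    have hQP : (1 - P a) * P a = 0 := by
      rw [Matrix.sub_mul, Matrix.one_mul, hPo a a, if_pos rfl, sub_self]
    have hdiff : (P a - W a b).PosSemidef := by
      have heq : P a - W a b = ∑ b' ∈ Finset.univ.erase b, W a b' := by
        rw [← hmargP a, ← Finset.add_sum_erase _ _ (Finset.mem_univ b),
          add_sub_cancel_left]
      rw [heq]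
      exact Finset.sum_induction _ _ (fun x y hx hy => hx.add hy)
        (Matrix.PosSemidef.zero) (fun b' _ => hWpsd a b')
    have hZ : (1 - P a) * W a b * (1 - P a) = 0 := by
      have h1 : ((1 - P a) * W a b * (1 - P a)).PosSemidef := by
        have := (hWpsd a b).mul_mul_conjTranspose_same (1 - P a)
        rwa [hQh] at this
      have h2 : (-((1 - P a) * W a b * (1 - P a))).PosSemidef := by
        have hp := hdiff.mul_mul_conjTranspose_same (1 - P a)
        rw [hQh] at hp
        have e1 : (1 - P a) * (P a - W a b) = -((1 - P a) * W a b) := by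
          rw [Matrix.mul_sub (1 - P a) (P a) (W a b), hQP, zero_sub]
        have heq : (1 - P a) * (P a - W a b) * (1 - P a)
            = -((1 - P a) * W a b * (1 - P a)) := by
          rw [e1, Matrix.neg_mul]
        rwa [heq] at hp
      exact psd_neg_psd_eq_zero h1 h2
    have hright : W a b * (1 - P a) = 0 := sandwich (hWpsd a b) hQh hZ
    have hleft : (1 - P a) * W a b = 0 := by
      have := congrArg conjTranspose hright
      rwa [conjTranspose_mul, hQh, (hWpsd a b).1.eq, conjTranspose_zero] at this
    exact ⟨hright, hleft⟩
  have hfix : ∀ a b, W a b * P a = W a b ∧ P a * W a b = W a b := by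
    intro a b
    obtain ⟨hr, hl⟩ := key a b
    rw [Matrix.mul_sub, mul_one, sub_eq_zero] at hr
    rw [Matrix.sub_mul, one_mul, sub_eq_zero] at hl
    exact ⟨hr.symm, hl.symm⟩
  have hmain : ∀ a b, W a b = P a * W a b * P a := by
    intro a b
    rw [(hfix a b).2, (hfix a b).1]
  refine ⟨hmain, fun a a' b => ?_⟩
  by_cases h : a' = a
  · rw [h, (hfix a b).1, (hfix a b).2]
  · have hPP : P a * P a' = 0 := by rw [hPo, if_neg (fun hh => h hh.symm)]
    have hPP' : P a' * P a = 0 := by rw [hPo, if_neg h]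
    rw [← (hfix a b).1, ← (hfix a b).2, Matrix.mul_assoc, hPP, Matrix.mul_zero,
      ← Matrix.mul_assoc, ← Matrix.mul_assoc, hPP', Matrix.zero_mul, Matrix.zero_mul]
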